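/- Let v₁,…,vₙ (n ≥ 3) be the vertices, in counterclockwise order at height one, of a convex polygon P in ℝ³, and let φ* ∈ relint(Γₙ) be the critical point of F_P(φ) = Σ_{i<j<k} det(vᵢ,vⱼ,v_k) φⁱφʲφᵏ on Γₙ = {φ ∈ ℝ≥0ⁿ : Σφⁱ = r}. Then φ*ˢ = (r/3) · (Σ_{{i,j,k} ∋ s} c_{ijk} φ*ⁱφ*ʲφ*ᵏ) / F_P(φ*) for each s, where c_{ijk} = det(vᵢ,vⱼ,v_k); in particular 0 < φ*ˢ ≤ r/3 for all s. -/

import Mathlib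

/-- The determinant of the 3×3 matrix with columns `a`, `b`, `c`. -/
noncomputable def det3 (a b c : Fin 3 → ℝ) : ℝ :=
  Matrix.det (Matrix.of fun i j => ![a, b, c] j i)

/-- projection as a continuous linear map -/
noncomputable def prCLM {n : ℕ} (a : Fin n) : (Fin n → ℝ) →L[ℝ] ℝ :=
  ContinuousLinearMap.proj a

lemma aux_mono {n : ℕ} (c : ℝ) (i j k : Fin n) (φs : Fin n → ℝ) :
    HasFDerivAt (fun φ : Fin n → ℝ => c * φ i * φ j * φ k)
      ((c * φs j * φs k) • prCLM i + (c * φs i * φs k) • prCLM j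
        + (c * φs i * φs j) • prCLM k) φs := by
  have hproj : ∀ (a : Fin n), HasFDerivAt (fun φ : Fin n → ℝ => φ a) (prCLM a) φs :=
    fun a => (prCLM a).hasFDerivAt
  have h := (((hproj i).const_mul c).fun_mul (hproj j)).fun_mul (hproj k)
  refine h.congr_fderiv ?_
  ext e
  simp [prCLM, ContinuousLinearMap.add_apply, smul_eq_mul]
  ring

lemma aux_triple {n : ℕ} (c : ℝ) (i j k s : Fin n) (hij : i < j) (hjk : j < k)
    (φs : Fin n → ℝ) :
    φs s * ((c * φs j * φs k) * ((Pi.single s 1 : Fin n → ℝ) i) + (c * φs i * φs k) * ((Pi.single s 1 : Fin n → ℝ) j)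
      + (c * φs i * φs j) * ((Pi.single s 1 : Fin n → ℝ) k))
    = if s = i ∨ s = j ∨ s = k then c * φs i * φs j * φs k else 0 := by
  rcases eq_or_ne s i with h1 | h1
  · subst h1
    rw [if_pos (Or.inl rfl), Pi.single_eq_same,
        Pi.single_eq_of_ne (ne_of_gt hij), Pi.single_eq_of_ne (ne_of_gt (hij.trans hjk))]
    ring
  rcases eq_or_ne s j with h2 | h2
  · subst h2
    rw [if_pos (Or.inr (Or.inl rfl)), Pi.single_eq_same,
        Pi.single_eq_of_ne (Ne.symm h1), Pi.single_eq_of_ne (ne_of_gt hjk)]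
    ring
  rcases eq_or_ne s k with h3 | h3
  · subst h3
    rw [if_pos (Or.inr (Or.inr rfl)), Pi.single_eq_same,
        Pi.single_eq_of_ne (Ne.symm h1), Pi.single_eq_of_ne (Ne.symm h2)]
    ring
  · rw [if_neg (by tauto), Pi.single_eq_of_ne (Ne.symm h1), Pi.single_eq_of_ne (Ne.symm h2),
        Pi.single_eq_of_ne (Ne.symm h3)]
    ring

lemma aux_sum3 {n : ℕ} (i j k : Fin n) (hij : i < j) (hjk : j < k) (t : ℝ) :
    ∑ s : Fin n, (if s = i ∨ s = j ∨ s = k then t else 0) = 3 * t := by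
  have h : ∀ s : Fin n, (if s = i ∨ s = j ∨ s = k then t else 0)
      = (if s = i then t else 0) + (if s = j then t else 0) + (if s = k then t else 0) := by
    intro s
    rcases eq_or_ne s i with h1 | h1
    · subst h1
      simp [ne_of_lt hij, ne_of_lt (hij.trans hjk)]
    rcases eq_or_ne s j with h2 | h2
    · subst h2
      simp [h1, ne_of_lt hjk]
    rcases eq_or_ne s k with h3 | h3
    · subst h3
      simp [h1, h2]
    · simp [h1, h2, h3]
  rw [Finset.sum_congr rfl fun s _ => h s]
  simp [Finset.sum_add_distrib, Finset.sum_ite_eq']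
  ring

/-- At the critical point `φ*` of `F_P` on the simplex `Γₙ`,
each coordinate satisfies
`φ*ˢ = (r/3)·(Σ_{triples containing s} c_{ijk} φ*ⁱφ*ʲφ*ᵏ)/F_P(φ*)`,
and in particular `0 < φ*ˢ ≤ r/3`. -/
theorem critical_point_bound (n : ℕ) (hn : 3 ≤ n)
    (v : Fin n → (Fin 3 → ℝ)) (hheight : ∀ i, v i 2 = 1)
    (hccw : ∀ i j k : Fin n, i < j → j < k → 0 < det3 (v i) (v j) (v k))
    (r : ℝ) (hr : 0 < r)
    (F : (Fin n → ℝ) → ℝ)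
    (hF : F = fun φ => ∑ i, ∑ j ∈ Finset.Ioi i, ∑ k ∈ Finset.Ioi j,
      det3 (v i) (v j) (v k) * φ i * φ j * φ k)
    (φs : Fin n → ℝ) (hpos : ∀ i, 0 < φs i) (hsum : ∑ i, φs i = r)
    (hcrit : ∃ lam : ℝ, ∀ s, fderiv ℝ F φs (Pi.single s 1) = lam) :
    ∀ s : Fin n,
      φs s = (r / 3) *
        (∑ i, ∑ j ∈ Finset.Ioi i, ∑ k ∈ Finset.Ioi j,
          if s = i ∨ s = j ∨ s = k then
            det3 (v i) (v j) (v k) * φs i * φs j * φs k else 0) / F φs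
      ∧ 0 < φs s ∧ φs s ≤ r / 3 := by
  obtain ⟨lam, hlam⟩ := hcrit
  have hterm : ∀ i j k : Fin n, i < j → j < k →
      0 < det3 (v i) (v j) (v k) * φs i * φs j * φs k := fun i j k hij hjk =>
    mul_pos (mul_pos (mul_pos (hccw i j k hij hjk) (hpos i)) (hpos j)) (hpos k)
  -- the derivative of F
  have hFd : HasFDerivAt F (∑ i, ∑ j ∈ Finset.Ioi i, ∑ k ∈ Finset.Ioi j,
      ((det3 (v i) (v j) (v k) * φs j * φs k) • prCLM i
        + (det3 (v i) (v j) (v k) * φs i * φs k) • prCLM j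
        + (det3 (v i) (v j) (v k) * φs i * φs j) • prCLM k)) φs := by
    rw [hF]
    exact HasFDerivAt.fun_sum fun i _ => HasFDerivAt.fun_sum fun j _ =>
      HasFDerivAt.fun_sum fun k _ => aux_mono _ i j k φs
  have hval : ∀ s : Fin n, lam = ∑ i, ∑ j ∈ Finset.Ioi i, ∑ k ∈ Finset.Ioi j,
      ((det3 (v i) (v j) (v k) * φs j * φs k) * ((Pi.single s 1 : Fin n → ℝ) i)
        + (det3 (v i) (v j) (v k) * φs i * φs k) * ((Pi.single s 1 : Fin n → ℝ) j)
        + (det3 (v i) (v j) (v k) * φs i * φs j) * ((Pi.single s 1 : Fin n → ℝ) k)) := by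
    intro s
    rw [← hlam s, hFd.fderiv]
    simp [prCLM, ContinuousLinearMap.sum_apply, ContinuousLinearMap.add_apply, smul_eq_mul]
  have hT : ∀ s : Fin n, φs s * lam = ∑ i, ∑ j ∈ Finset.Ioi i, ∑ k ∈ Finset.Ioi j,
      (if s = i ∨ s = j ∨ s = k then det3 (v i) (v j) (v k) * φs i * φs j * φs k else 0) := by
    intro s
    rw [hval s, Finset.mul_sum]
    refine Finset.sum_congr rfl fun i _ => ?_
    rw [Finset.mul_sum]
    refine Finset.sum_congr rfl fun j hj => ?_
    rw [Finset.mul_sum]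
    refine Finset.sum_congr rfl fun k hk => ?_
    exact aux_triple _ i j k s (Finset.mem_Ioi.mp hj) (Finset.mem_Ioi.mp hk) φs
  -- Euler identity
  have hEuler : r * lam = 3 * F φs := by
    have h1 : r * lam = ∑ s, φs s * lam := by rw [← Finset.sum_mul, hsum]
    rw [h1, Finset.sum_congr rfl fun s _ => hT s, hF]
    beta_reduce
    rw [Finset.sum_comm, Finset.mul_sum]
    refine Finset.sum_congr rfl fun i _ => ?_
    rw [Finset.sum_comm, Finset.mul_sum]
    refine Finset.sum_congr rfl fun j hj => ?_
    rw [Finset.sum_comm, Finset.mul_sum]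
    refine Finset.sum_congr rfl fun k hk => ?_
    exact aux_sum3 i j k (Finset.mem_Ioi.mp hj) (Finset.mem_Ioi.mp hk) _
  -- positivity of F
  have hFpos : 0 < F φs := by
    have h0 : (0 : ℕ) < n := by omega
    have h1 : (1 : ℕ) < n := by omega
    have h2 : (2 : ℕ) < n := by omega
    rw [hF]
    refine Finset.sum_pos' (fun i _ => Finset.sum_nonneg fun j hj =>
      Finset.sum_nonneg fun k hk =>
        (hterm i j k (Finset.mem_Ioi.mp hj) (Finset.mem_Ioi.mp hk)).le)
      ⟨⟨0, h0⟩, Finset.mem_univ _, ?_⟩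
    refine Finset.sum_pos' (fun j hj => Finset.sum_nonneg fun k hk =>
      (hterm _ j k (Finset.mem_Ioi.mp hj) (Finset.mem_Ioi.mp hk)).le)
      ⟨⟨1, h1⟩, Finset.mem_Ioi.mpr (by simp [Fin.lt_def]), ?_⟩
    refine Finset.sum_pos' (fun k hk => (hterm _ _ k (by simp [Fin.lt_def])
      (Finset.mem_Ioi.mp hk)).le)
      ⟨⟨2, h2⟩, Finset.mem_Ioi.mpr (by simp [Fin.lt_def]), ?_⟩
    exact hterm _ _ _ (by simp [Fin.lt_def]) (by simp [Fin.lt_def])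
  intro s
  have hTs := hT s
  have hTle : (∑ i, ∑ j ∈ Finset.Ioi i, ∑ k ∈ Finset.Ioi j,
      (if s = i ∨ s = j ∨ s = k then det3 (v i) (v j) (v k) * φs i * φs j * φs k else 0))
      ≤ F φs := by
    rw [hF]
    refine Finset.sum_le_sum fun i _ => Finset.sum_le_sum fun j hj =>
      Finset.sum_le_sum fun k hk => ?_
    split_ifs with h
    · exact le_refl _
    · exact (hterm i j k (Finset.mem_Ioi.mp hj) (Finset.mem_Ioi.mp hk)).le
  have hrne : r ≠ 0 := ne_of_gt hr
  have hFne : F φs ≠ 0 := ne_of_gt hFpos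
  have hl : lam = 3 * F φs / r := by field_simp; linarith
  rw [hl] at hTs
  have hTs' : φs s * (3 * F φs) = (∑ i, ∑ j ∈ Finset.Ioi i, ∑ k ∈ Finset.Ioi j,
      (if s = i ∨ s = j ∨ s = k then det3 (v i) (v j) (v k) * φs i * φs j * φs k else 0)) * r := by
    field_simp at hTs
    linarith
  refine ⟨?_, hpos s, ?_⟩
  · field_simp
    linarith
  · nlinarith [mul_nonneg (sub_nonneg.mpr hTle) hr.le, hFpos, hpos s]
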